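/- For every n ≥ 3 there exist two rooted binary phylogenetic trees T and T' on a common label set X of size n+1 and two orderings σ and σ' on X such that d^σ_OLA(T,T') = 1 and d^{σ'}_OLA(T,T') = n−1; hence the difference |d^σ_OLA(T,T') − d^{σ'}_OLA(T,T')| can be as large as n−2, and this bound is sharp for this pair of trees. -/

import Mathlib

namespace Phylo

/-- A rooted binary tree with leaves labelled by `W`.  A rooted binary
phylogenetic tree (whose root has out-degree one) is represented by the
subtree hanging below the root's unique child; the root edge is implicit. -/
inductive PTree (W : Type) where
  | leaf (x : W)
  | node (l r : PTree W)
  deriving DecidableEq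

namespace PTree

variable {W V : Type}

def leaves : PTree W → List W
  | leaf x => [x]
  | node l r => l.leaves ++ r.leaves

def map (f : W → V) : PTree W → PTree V
  | leaf x => leaf (f x)
  | node l r => node (l.map f) (r.map f)

/-- A tree is a phylogenetic tree when its leaves are bijectively labelled,
i.e. no label occurs twice. -/
def IsPhylo (t : PTree W) : Prop := t.leaves.Nodup

def labelSet [DecidableEq W] (t : PTree W) : Finset W := t.leaves.toFinset

end PTree

open PTree

/-- An ordering on the label set of `t`: a bijection from the leaf labels
onto `{1, …, n}`. -/
def IsOrd [DecidableEq W] (t : PTree W) (σ : W → ℕ) : Prop :=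
  Set.BijOn σ ↑t.labelSet (Set.Icc 1 t.leaves.length)

/-! ### Basic operations on trees with natural-number (rank) labels -/

def minLeaf : PTree ℕ → ℕ
  | .leaf x => x
  | .node l r => min (minLeaf l) (minLeaf r)

/-- Restriction of a tree to the leaves satisfying `p` (suppressing vertices
of out-degree one); `none` if no leaf survives. -/
def restrict {W : Type} (p : W → Bool) : PTree W → Option (PTree W)
  | .leaf x => if p x then some (.leaf x) else none
  | .node l r =>
    match restrict p l, restrict p r with
    | some a, some b => some (.node a b)
    | some a, none => some a
    | none, some b => some b
    | none, none => none

/-- The sibling subtree of the leaf labelled `i` (the other child of its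
parent), if the leaf occurs. -/
def sibling {W : Type} [DecidableEq W] (i : W) : PTree W → Option (PTree W)
  | .leaf _ => none
  | .node l r =>
    if l = .leaf i then some r
    else if r = .leaf i then some l
    else match sibling i l with
      | some s => some s
      | none => sibling i r

/-- Hamming distance between two (equal-length) vectors. -/
def hamming {α : Type} [DecidableEq α] (u v : List α) : ℕ :=
  (u.zip v).countP fun p => decide (p.1 ≠ p.2)

/-! ### OLA -/

/-- The OLA label of a vertex, given as the root of its subtree (inside a tree
whose leaves are labelled by ranks):  a leaf is labelled by its rank, and the
internal vertex created when the `j`-th leaf was attached is labelled `-j`;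
this creation step equals the larger of the two minimal leaf ranks below. -/
def olaLabel : PTree ℕ → ℤ
  | .leaf x => (x : ℤ)
  | .node l r => -(max (minLeaf l) (minLeaf r) : ℤ)

/-- The `i`-th coordinate (for `i ≥ 3`) of the OLA vector:  the OLA label of
the sibling of the rank-`i` leaf in the restriction of `t` to ranks `≤ i`. -/
def olaCoord (t : PTree ℕ) (i : ℕ) : ℤ :=
  match restrict (fun x => decide (x ≤ i)) t with
  | some ti =>
    match sibling i ti with
    | some s => olaLabel s
    | none => 0
  | none => 0

/-- The OLA vector of a tree whose leaves are labelled by ranks `1, …, n`. -/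
def olaVec (t : PTree ℕ) : List ℤ :=
  (List.range t.leaves.length).map fun j =>
    if j = 0 then 0 else if j = 1 then 1 else olaCoord t (j + 1)

/-- The OLA distance of `t, t'` with respect to the ordering `σ`. -/
def dOLA {W : Type} (σ : W → ℕ) (t t' : PTree W) : ℕ :=
  hamming (olaVec (t.map σ)) (olaVec (t'.map σ))

/-- The OLA measure: minimum OLA distance over all orderings. -/
noncomputable def dOLAstar {W : Type} [DecidableEq W] (t t' : PTree W) : ℕ :=
  sInf {k | ∃ σ : W → ℕ, IsOrd t σ ∧ dOLA σ t t' = k}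

end Phylo
/-! ### HOP -/

namespace Phylo
open PTree

/-- The HOP labels of the internal vertices on the path from the root of `t`
down to the leaf of rank `i` (the internal HOP label of a vertex with children
`l, r` is `max (minLeaf l) (minLeaf r)`). -/
def pathLabels (i : ℕ) : PTree ℕ → List ℕ
  | .leaf _ => []
  | .node l r =>
    if i ∈ l.leaves then max (minLeaf l) (minLeaf r) :: pathLabels i l
    else if i ∈ r.leaves then max (minLeaf l) (minLeaf r) :: pathLabels i r
    else []

/-- The `i`-th path segment `v(P_i)` of the HOP vector of `t`:  the internal
labels strictly between the internal vertex labelled `i` and the leaf of rank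
`i` (for `i = 1` the vertex labelled `1` is the root `ρ`). -/
def hopSeg (t : PTree ℕ) (i : ℕ) : List ℕ :=
  if i = 1 then 1 :: pathLabels 1 t
  else ((pathLabels i t).dropWhile fun a => decide (a ≠ i)).drop 1

/-- Length of a longest common subsequence of two lists. -/
def lcsLen : List ℕ → List ℕ → ℕ
  | [], _ => 0
  | _ :: _, [] => 0
  | a :: u, b :: v =>
    if a = b then lcsLen u v + 1
    else max (lcsLen (a :: u) v) (lcsLen u (b :: v))
  termination_by u v => u.length + v.length
  decreasing_by all_goals (simp only [List.length_cons]; omega)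

/-- The HOP similarity of `t, t'` with respect to `σ`. -/
def simHOP {W : Type} (σ : W → ℕ) (t t' : PTree W) : ℕ :=
  ∑ i ∈ Finset.range (t.leaves.length - 1),
    lcsLen (hopSeg (t.map σ) (i + 1)) (hopSeg (t'.map σ) (i + 1))

/-- The HOP distance of `t, t'` with respect to `σ`. -/
def dHOP {W : Type} (σ : W → ℕ) (t t' : PTree W) : ℕ :=
  t.leaves.length - simHOP σ t t'

/-- The HOP measure: minimum HOP distance over all orderings. -/
noncomputable def dHOPstar {W : Type} [DecidableEq W] (t t' : PTree W) : ℕ :=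
  sInf {k | ∃ σ : W → ℕ, IsOrd t σ ∧ dHOP σ t t' = k}

end Phylo
/-! ### Phylo2Vec (P2V) -/

namespace Phylo
open PTree

/-- Binary trees with rank-labelled leaves and optionally labelled internal
vertices, used to run the P2V labelling algorithm. -/
inductive LTree where
  | leaf (r : ℕ)
  | node (lbl : Option ℕ) (l r : LTree)
  deriving DecidableEq

namespace LTree

def ofPTree : PTree ℕ → LTree
  | .leaf x => .leaf x
  | .node l r => .node none (ofPTree l) (ofPTree r)

/-- The label of the root of an `LTree` (a leaf is labelled by its rank). -/
def lbl? : LTree → Option ℕ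
  | .leaf r => some r
  | .node lbl _ _ => lbl

/-- The candidate vertices for the next P2V label: unlabelled internal
vertices both of whose children are labelled, together with the larger child
label; a vertex is recorded by its position (a list of booleans). -/
def cands : LTree → List (List Bool × ℕ)
  | .leaf _ => []
  | .node lbl l r =>
    (match lbl, l.lbl?, r.lbl? with
      | none, some a, some b => [(([] : List Bool), max a b)]
      | _, _, _ => []) ++
    (cands l).map (fun p => (false :: p.1, p.2)) ++
    (cands r).map (fun p => (true :: p.1, p.2))

/-- Set the label of the vertex at position `p` to `j`. -/
def setLbl (j : ℕ) : LTree → List Bool → LTree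
  | .leaf r, _ => .leaf r
  | .node _ l r, [] => .node (some j) l r
  | .node lbl l r, false :: p => .node lbl (setLbl j l p) r
  | .node lbl l r, true :: p => .node lbl l (setLbl j r p)

/-- One step of the P2V labelling: give label `j` to the candidate vertex
whose larger child label is maximal. -/
def step (j : ℕ) (t : LTree) : LTree :=
  match List.argmax Prod.snd t.cands with
  | some c => setLbl j t c.1
  | none => t

/-- Run `k` steps of the P2V labelling, starting with label `j`. -/
def run : ℕ → ℕ → LTree → LTree
  | 0, _, t => t
  | k + 1, j, t => run k (j + 1) (step j t)

def siblingL (i : ℕ) : LTree → Option LTree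
  | .leaf _ => none
  | .node _ l r =>
    if l = .leaf i then some r
    else if r = .leaf i then some l
    else match siblingL i l with
      | some s => some s
      | none => siblingL i r

def subAtL : LTree → List Bool → Option LTree
  | t, [] => some t
  | .leaf _, _ :: _ => none
  | .node _ l _, false :: p => subAtL l p
  | .node _ _ r, true :: p => subAtL r p

end LTree

/-- The `i`-th step P2V labelling of the restriction `T_i` of `t` to ranks
`≤ i`:  the internal vertices are labelled `i+1, …, 2i-1`. -/
def p2vLabeled (t : PTree ℕ) (i : ℕ) : Option LTree :=
  (restrict (fun x => decide (x ≤ i)) t).map fun ti =>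
    LTree.run (i - 1) (i + 1) (LTree.ofPTree ti)

/-- The `i`-th coordinate (for `i ≥ 3`) of the P2V vector: the `i`-th step
P2V label of the sibling of the rank-`i` leaf in `T_i`. -/
def p2vCoord (t : PTree ℕ) (i : ℕ) : ℤ :=
  match p2vLabeled t i with
  | some lt =>
    match LTree.siblingL i lt with
    | some s => ((LTree.lbl? s).getD 0 : ℤ)
    | none => 0
  | none => 0

/-- The P2V vector of a tree whose leaves are labelled by ranks `1, …, n`. -/
def p2vVec (t : PTree ℕ) : List ℤ :=
  (List.range t.leaves.length).map fun j =>
    if j = 0 then 0 else if j = 1 then 1 else p2vCoord t (j + 1)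

/-- The P2V distance of `t, t'` with respect to `σ`. -/
def dP2V {W : Type} (σ : W → ℕ) (t t' : PTree W) : ℕ :=
  hamming (p2vVec (t.map σ)) (p2vVec (t'.map σ))

/-- The P2V measure: minimum P2V distance over all orderings. -/
noncomputable def dP2Vstar {W : Type} [DecidableEq W] (t t' : PTree W) : ℕ :=
  sInf {k | ∃ σ : W → ℕ, IsOrd t σ ∧ dP2V σ t t' = k}

end Phylo
/-! ### Isomorphism, positions, and the rSPR distance -/

namespace Phylo
open PTree

/-- Isomorphism of rooted (leaf-labelled) binary trees: the shapes agree up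
to swapping children, and corresponding leaves carry the same label. -/
inductive Iso {W : Type} : PTree W → PTree W → Prop
  | leaf (x : W) : Iso (.leaf x) (.leaf x)
  | node {a b c d : PTree W} : Iso a c → Iso b d → Iso (.node a b) (.node c d)
  | swap {a b c d : PTree W} : Iso a d → Iso b c → Iso (.node a b) (.node c d)

/-- The subtree of `t` at position `p` (a list of booleans: `false` = left
child, `true` = right child). -/
def subAt {W : Type} : PTree W → List Bool → Option (PTree W)
  | t, [] => some t
  | .leaf _, _ :: _ => none
  | .node l _, false :: p => subAt l p
  | .node _ r, true :: p => subAt r p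

/-- Replace the subtree of `t` at position `p` by `s`. -/
def replaceAt {W : Type} : PTree W → List Bool → PTree W → PTree W
  | _, [], s => s
  | .leaf x, _ :: _, _ => .leaf x
  | .node l r, false :: p, s => .node (replaceAt l p s) r
  | .node l r, true :: p, s => .node l (replaceAt r p s)

/-- The position of the leaf labelled `x` in `t`, if it occurs. -/
def leafPos {W : Type} [DecidableEq W] (x : W) : PTree W → Option (List Bool)
  | .leaf y => if y = x then some [] else none
  | .node l r =>
    match leafPos x l with
    | some p => some (false :: p)
    | none => (leafPos x r).map (true :: ·)

/-- The position of the leaf labelled `x` (defaulting to the root). -/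
def pos {W : Type} [DecidableEq W] (t : PTree W) (x : W) : List Bool :=
  (leafPos x t).getD []

/-- One-hole contexts: plugging a tree into a context reconstructs a tree.
Each frame records a sibling subtree and on which side it sits. -/
def plug {W : Type} : List (Bool × PTree W) → PTree W → PTree W
  | [], t => t
  | (false, s) :: c, t => .node (plug c t) s
  | (true, s) :: c, t => .node s (plug c t)

/-- A single rooted subtree prune and regraft (rSPR) move: prune the subtree
`s` (whose parent is an internal vertex of `t`), suppress its parent, and
regraft `s` by subdividing an edge (possibly the root edge) of the remaining
tree. -/
def RSPRMove {W : Type} (t t' : PTree W) : Prop :=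
  ∃ (c₁ : List (Bool × PTree W)) (s r : PTree W),
    (t = plug c₁ (.node s r) ∨ t = plug c₁ (.node r s)) ∧
    ∃ (c₂ : List (Bool × PTree W)) (b : PTree W),
      plug c₁ r = plug c₂ b ∧
      (t' = plug c₂ (.node s b) ∨ t' = plug c₂ (.node b s))

/-- `Reach k t t'`: `t` can be transformed into (a tree isomorphic to) `t'`
by `k` rSPR moves. -/
inductive Reach {W : Type} : ℕ → PTree W → PTree W → Prop
  | refl {t t' : PTree W} : Iso t t' → Reach 0 t t'
  | step {k : ℕ} {t u t' : PTree W} :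
      RSPRMove t u → Reach k u t' → Reach (k + 1) t t'

/-- The rSPR distance. -/
noncomputable def dRSPR {W : Type} (t t' : PTree W) : ℕ :=
  sInf {k | Reach k t t'}

end Phylo
/-! ### Agreement forests and the hybrid number -/

namespace Phylo
open PTree

/-- Longest common prefix of two positions. -/
def lcp : List Bool → List Bool → List Bool
  | a :: u, b :: v => if a = b then a :: lcp u v else []
  | _, _ => []

variable {W : Type} [DecidableEq W]

/-- Restriction of `t` to the labels in the finite set `L`. -/
def restrictF (t : PTree W) (L : Finset W) : Option (PTree W) :=
  restrict (fun x => decide (x ∈ L)) t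

/-- The vertex set (as a set of positions) of the minimal subtree `T(L)` of
`t` connecting the leaves with labels in `L`. -/
def compVerts (t : PTree W) (L : Finset W) : Set (List Bool) :=
  {p | ∃ a ∈ L, ∃ b ∈ L,
    lcp (pos t a) (pos t b) <+: p ∧ (p <+: pos t a ∨ p <+: pos t b)}

/-- The vertex set of the minimal subtree of `t` connecting the leaves with
labels in `L` together with the root `ρ`. -/
def rhoVerts (t : PTree W) (L : Finset W) : Set (List Bool) :=
  {p | ∃ a ∈ L, p <+: pos t a}

/-- The position of the root of the minimal connecting subtree `T(L)`. -/
noncomputable def rootOf (t : PTree W) (L : Finset W) : List Bool :=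
  match L.toList with
  | [] => []
  | a :: rest => rest.foldr (fun b acc => lcp (pos t b) acc) (pos t a)

/-- `Lρ` (the label set of the component containing the root `ρ`, possibly
empty) together with the nonempty label sets in `C` form an agreement forest
for `t` and `t'`. -/
def IsAgreementForest (t t' : PTree W) (Lρ : Finset W) (C : Finset (Finset W)) : Prop :=
  -- the label sets partition the common label set
  (∀ L ∈ C, L.Nonempty) ∧
  (∀ L ∈ C, ∀ L' ∈ C, L ≠ L' → Disjoint L L') ∧
  (∀ L ∈ C, Disjoint Lρ L) ∧
  (∀ x ∈ t.labelSet, x ∈ Lρ ∨ ∃ L ∈ C, x ∈ L) ∧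
  (↑Lρ ⊆ (t.labelSet : Set W)) ∧ (∀ L ∈ C, ↑L ⊆ (t.labelSet : Set W)) ∧
  -- the restrictions of t and t' to each label set are isomorphic
  (∀ L ∈ insert Lρ C,
    ∀ u, restrictF t L = some u → ∃ u', restrictF t' L = some u' ∧ Iso u u') ∧
  -- the minimal connecting subtrees are vertex-disjoint, in t and in t'
  (∀ L ∈ C, ∀ L' ∈ C, L ≠ L' →
    (∀ p ∈ compVerts t L, p ∉ compVerts t L') ∧
    (∀ p ∈ compVerts t' L, p ∉ compVerts t' L')) ∧
  (∀ L ∈ C,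
    (∀ p ∈ rhoVerts t Lρ, p ∉ compVerts t L) ∧
    (∀ p ∈ rhoVerts t' Lρ, p ∉ compVerts t' L))

/-- The ancestor relation between components of an agreement forest: the root
of `T(L)` is a (proper) ancestor of the root of `T(L')` in `t` or in `t'`. -/
def afEdge (t t' : PTree W) (C : Finset (Finset W)) (L L' : Finset W) : Prop :=
  L ∈ C ∧ L' ∈ C ∧ L ≠ L' ∧
  ((rootOf t L <+: rootOf t L' ∧ rootOf t L ≠ rootOf t L') ∨
   (rootOf t' L <+: rootOf t' L' ∧ rootOf t' L ≠ rootOf t' L'))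

/-- An acyclic agreement forest. -/
def IsAcyclicAF (t t' : PTree W) (Lρ : Finset W) (C : Finset (Finset W)) : Prop :=
  IsAgreementForest t t' Lρ C ∧
  ∀ L, ¬ Relation.TransGen (afEdge t t' C) L L

/-- The hybrid number of `t` and `t'`: the minimum number of non-root
components of an acyclic agreement forest (Baroni–Semple–Steel). -/
noncomputable def hyb (t t' : PTree W) : ℕ :=
  sInf {k | ∃ Lρ C, IsAcyclicAF t t' Lρ C ∧ C.card = k}

/-! ### Caterpillars and cherry-picking sequences -/

/-- The caterpillar `(z₁, z₂, z₃, …)`: `z₁, z₂` form a cherry and each later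
leaf is attached above the previous ones. -/
def caterpillar (z₁ z₂ : W) (zs : List W) : PTree W :=
  zs.foldl (fun t z => .node t (.leaf z)) (.node (.leaf z₁) (.leaf z₂))

/-- The cherry partner of the leaf `x` in `t`, if `x` is in a cherry. -/
def cherryPartner (x : W) (t : PTree W) : Option W :=
  match sibling x t with
  | some (.leaf y) => some y
  | _ => none

/-- The restriction of `t` obtained by deleting the first `i` elements of the
sequence `S`. -/
def restAfter (t : PTree W) (S : List W) (i : ℕ) : Option (PTree W) :=
  restrict (fun x => decide (x ∉ S.take i)) t

/-- `S` is a cherry-picking sequence for `t`: every element except the last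
is in a cherry of the restriction of `t` to the not-yet-picked leaves. -/
def IsCPS (t : PTree W) (S : List W) : Prop :=
  ∀ i, i + 1 < S.length →
    ∃ u, restAfter t S i = some u ∧
      ∀ h : i < S.length, ∃ y, cherryPartner (S.get ⟨i, h⟩) u = some y

/-- `S` is a common cherry-picking sequence for `t` and `t'` (in particular
it enumerates the common leaf set). -/
def IsCommonCPS (t t' : PTree W) (S : List W) : Prop :=
  S.Nodup ∧ (∀ x, x ∈ S ↔ x ∈ t.leaves) ∧ IsCPS t S ∧ IsCPS t' S

/-- The weight of a common cherry-picking sequence: the number of positions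
(except the last) at which the cherry partners in the two restrictions
disagree. -/
def wtCPS (t t' : PTree W) (S : List W) : ℕ :=
  (List.range (S.length - 1)).countP fun i =>
    match S[i]?, restAfter t S i, restAfter t' S i with
    | some x, some u, some u' => decide (cherryPartner x u ≠ cherryPartner x u')
    | _, _, _ => false

/-- The ordering on the leaf set induced by the sequence `S`:
`σ (x_i) = n - i + 1` (with `i` one-based). -/
def inducedOrd (S : List W) (x : W) : ℕ :=
  S.length - S.idxOf x

end Phylo
/-! ### Phylogenetic networks, tree-child / temporal networks, display -/

namespace Phylo
open PTree

/-- A finite directed graph with a root and designated leaf vertices, used to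
model rooted binary phylogenetic networks. -/
structure Network (W : Type) where
  V : Type
  [fin : Fintype V]
  [deq : DecidableEq V]
  edge : V → V → Bool
  root : V
  leafOf : W → V

attribute [instance] Network.fin Network.deq

namespace Network

variable {W : Type} [DecidableEq W]

def inDeg (N : Network W) (v : N.V) : ℕ :=
  Fintype.card {u : N.V // N.edge u v = true}

def outDeg (N : Network W) (v : N.V) : ℕ :=
  Fintype.card {u : N.V // N.edge v u = true}

/-- The number of reticulations (in-degree-two vertices). -/
def retCount (N : Network W) : ℕ :=
  Fintype.card {v : N.V // N.inDeg v = 2}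

/-- `N` is a rooted binary phylogenetic network with leaf set `A`. -/
def Wf (N : Network W) (A : Finset W) : Prop :=
  (∀ v : N.V, ¬ Relation.TransGen (fun a b : N.V => N.edge a b = true) v v) ∧
  N.inDeg N.root = 0 ∧ N.outDeg N.root = 1 ∧
  Set.InjOn N.leafOf ↑A ∧
  (∀ x ∈ A, N.inDeg (N.leafOf x) = 1 ∧ N.outDeg (N.leafOf x) = 0) ∧
  (∀ v : N.V, N.outDeg v = 0 → ∃ x ∈ A, v = N.leafOf x) ∧
  (∀ v : N.V, v ≠ N.root → (∀ x ∈ A, v ≠ N.leafOf x) →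
    (N.inDeg v = 1 ∧ N.outDeg v = 2) ∨ (N.inDeg v = 2 ∧ N.outDeg v = 1))

/-- Tree-child: every non-leaf vertex has a child of in-degree one. -/
def TreeChild (N : Network W) : Prop :=
  ∀ v : N.V, N.outDeg v ≠ 0 → ∃ u : N.V, N.edge v u = true ∧ N.inDeg u = 1

/-- Temporal: there is a time map which is constant along reticulation edges
and strictly increasing along tree edges. -/
def Temporal (N : Network W) : Prop :=
  ∃ time : N.V → ℝ, (∀ v, 0 < time v) ∧
    ∀ u v : N.V, N.edge u v = true →
      (N.inDeg v = 2 → time u = time v) ∧ (N.inDeg v = 1 → time u < time v)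

/-- A directed path in `N` from `u` to `v`, with at least one edge. -/
def GoodPath (N : Network W) (l : List N.V) (u v : N.V) : Prop :=
  2 ≤ l.length ∧ l.head? = some u ∧ l.getLast? = some v ∧
    l.Chain' (fun a b => N.edge a b = true)

/-- The interior of a path. -/
def inter {α : Type} (l : List α) : List α := (l.drop 1).dropLast

/-- `N` displays the tree `t`: there is a subtree of `N` which is a
subdivision of `t` (including its root edge).  The vertices of `t` are given
by their positions; edge `e = none` is the root edge and `e = some (p, b)`
the edge from the vertex at `p` to its `b`-child. -/
def Displays (N : Network W) (t : PTree W) : Prop :=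
  ∃ (φ : List Bool → N.V) (P : Option (List Bool × Bool) → List N.V),
    GoodPath N (P none) N.root (φ []) ∧
    (∀ p l r, subAt t p = some (.node l r) →
      GoodPath N (P (some (p, false))) (φ p) (φ (p ++ [false])) ∧
      GoodPath N (P (some (p, true))) (φ p) (φ (p ++ [true]))) ∧
    (∀ x : W, ∀ p, leafPos x t = some p → φ p = N.leafOf x) ∧
    (∀ p q, (subAt t p).isSome → (subAt t q).isSome → φ p = φ q → p = q) ∧
    -- the paths realising distinct tree edges are internally disjoint
    (∀ e e' : Option (List Bool × Bool), e ≠ e' →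
      (∀ pb, e = some pb → ∃ l r, subAt t pb.1 = some (.node l r)) →
      (∀ pb, e' = some pb → ∃ l r, subAt t pb.1 = some (.node l r)) →
      ∀ v ∈ inter (P e), v ∉ P e') ∧
    (∀ e : Option (List Bool × Bool),
      (∀ pb, e = some pb → ∃ l r, subAt t pb.1 = some (.node l r)) →
      ∀ v ∈ inter (P e), ∀ p, (subAt t p).isSome → v ≠ φ p)

end Network

/-- The temporal tree-child hybrid number of `t` and `t'`. -/
noncomputable def hybTemporal (t t' : PTree W) [DecidableEq W] : ℕ :=
  sInf {k | ∃ N : Network W, N.Wf t.labelSet ∧ N.TreeChild ∧ N.Temporal ∧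
    N.Displays t ∧ N.Displays t' ∧ N.retCount = k}

end Phylo
/-! ### Labelled decorations, pendant subtrees, and the reductions -/

namespace Phylo
open PTree

/-- Binary trees in which every vertex carries a label in `α`. -/
inductive DTree (α : Type) where
  | leaf (lbl : α)
  | node (lbl : α) (l r : DTree α)

/-- Label-preserving isomorphism of decorated trees. -/
inductive DIso {α : Type} : DTree α → DTree α → Prop
  | leaf (x : α) : DIso (.leaf x) (.leaf x)
  | node {k : α} {a b c d : DTree α} :
      DIso a c → DIso b d → DIso (.node k a b) (.node k c d)
  | swap {k : α} {a b c d : DTree α} :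
      DIso a d → DIso b c → DIso (.node k a b) (.node k c d)

/-- The HOP labelling of a (rank-labelled) tree: leaves are labelled by their
rank and an internal vertex by the larger of the minimal ranks below its two
children. -/
def hopDec : PTree ℕ → DTree ℕ
  | .leaf x => .leaf x
  | .node l r => .node (max (minLeaf l) (minLeaf r)) (hopDec l) (hopDec r)

/-- The OLA labelling of a (rank-labelled) tree: leaves are labelled by their
rank and an internal vertex by `-j` where `j` is the step at which it was
created (the larger of the minimal ranks below its two children). -/
def olaDec : PTree ℕ → DTree ℤ
  | .leaf x => .leaf (x : ℤ)
  | .node l r => .node (-(max (minLeaf l) (minLeaf r) : ℤ)) (olaDec l) (olaDec r)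

/-- The P2V labelling of the subtree at position `p` of a rank-labelled tree
`t` with `n` leaves (labels read off after the full run of the algorithm). -/
noncomputable def p2vDecAt (t : PTree ℕ) (p : List Bool) : Option (DTree ℕ) :=
  (Option.bind (p2vLabeled t t.leaves.length) (fun lt => LTree.subAtL lt p)).map toD
where
  toD : LTree → DTree ℕ
    | .leaf r => .leaf r
    | .node lbl l r => .node (lbl.getD 0) (toD l) (toD r)

/-- The restriction of a vector to the coordinates whose (one-based) indices
lie in `R` (the coordinates associated with a set of ranks). -/
def restrictVec (v : List ℤ) (R : Finset ℕ) : List ℤ :=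
  (List.range v.length).filterMap fun j =>
    if j + 1 ∈ R then v[j]? else none

variable {W : Type} [DecidableEq W]

/-- `Y` is the label set of a pendant subtree of `t`. -/
def IsPendantSet (t : PTree W) (Y : Finset W) : Prop :=
  ∃ p s, subAt t p = some s ∧ s.labelSet = Y

/-- `Y` carries a common pendant subtree of `t` and `t'`. -/
def IsCommonPendant (t t' : PTree W) (Y : Finset W) : Prop :=
  IsPendantSet t Y ∧ IsPendantSet t' Y ∧
  ∀ u u', restrictF t Y = some u → restrictF t' Y = some u' → Iso u u'

/-- The position of the parent of the leaf labelled `x`. -/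
def parentPos (t : PTree W) (x : W) : List Bool := (pos t x).dropLast

/-- `xs` is a chain of `t`. -/
def IsChain (t : PTree W) (xs : List W) : Prop :=
  3 ≤ xs.length ∧ (∀ x ∈ xs, x ∈ t.leaves) ∧ xs.Nodup ∧
  (∀ (h1 : 0 < xs.length) (h2 : 1 < xs.length),
    parentPos t (xs.get ⟨0, h1⟩) = parentPos t (xs.get ⟨1, h2⟩) ∨
    parentPos t (xs.get ⟨1, h2⟩) = (parentPos t (xs.get ⟨0, h1⟩)).dropLast) ∧
  (∀ i (h : i + 2 < xs.length),
    parentPos t (xs.get ⟨i + 2, h⟩)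
      = (parentPos t (xs.get ⟨i + 1, by omega⟩)).dropLast)

/-- A single application of the subtree reduction, replacing (in both trees)
a maximal common pendant subtree with label set `Y` (with at least two
leaves) by a single new leaf `pnew`. -/
def SubtreeReduction (t t' u u' : PTree W) (Y : Finset W) (pnew : W) : Prop :=
  IsCommonPendant t t' Y ∧ 2 ≤ Y.card ∧
  (∀ Z, IsCommonPendant t t' Z → Y ⊆ Z → Z = Y) ∧
  pnew ∉ t.leaves ∧ pnew ∉ t'.leaves ∧
  (∃ p s, subAt t p = some s ∧ s.labelSet = Y ∧ u = replaceAt t p (.leaf pnew)) ∧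
  (∃ q s', subAt t' q = some s' ∧ s'.labelSet = Y ∧ u' = replaceAt t' q (.leaf pnew))

/-- A single application of the chain reduction, replacing (in both trees) a
maximal common chain `xs` of length at least four by a common chain of length
three on the new labels `c₁, c₂, c₃`. -/
def ChainReduction (t t' u u' : PTree W) (xs : List W) (c₁ c₂ c₃ : W) : Prop :=
  4 ≤ xs.length ∧ IsChain t xs ∧ IsChain t' xs ∧
  (∀ ys, IsChain t ys → IsChain t' ys → xs <:+: ys → ys = xs) ∧
  c₁ ∉ t.leaves ∧ c₂ ∉ t.leaves ∧ c₃ ∉ t.leaves ∧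
  c₁ ≠ c₂ ∧ c₁ ≠ c₃ ∧ c₂ ≠ c₃ ∧
  (∃ u₀ u₀',
    restrict (fun x => decide (x ∉ xs.drop 3)) t = some u₀ ∧
    restrict (fun x => decide (x ∉ xs.drop 3)) t' = some u₀' ∧
    u = u₀.map (chainRen xs c₁ c₂ c₃) ∧ u' = u₀'.map (chainRen xs c₁ c₂ c₃))
where
  chainRen (xs : List W) (c₁ c₂ c₃ : W) (x : W) : W :=
    if xs[0]? = some x then c₁ else if xs[1]? = some x then c₂
    else if xs[2]? = some x then c₃ else x

/-- The elements of `Y` occupy consecutive ranks under `σ`. -/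
def ConsecRanks (σ : W → ℕ) (Y : Finset W) : Prop :=
  ∃ i, Y.image σ = Finset.Ico i (i + Y.card)

end Phylo
/-! ### Polynomial time, NP, and NP-hardness -/

namespace Phylo

/-- Decision problems over binary strings. -/
def Lang : Type := List Bool → Prop

/-- A trivial finite encoding of binary strings. -/
def boolsEnc : Computability.Encoding (List Bool) Bool :=
  ⟨id, some, fun _ => rfl⟩

/-- `f` is computable in polynomial time (by a Turing machine, in the sense
of Mathlib's `Turing.TM2ComputableInPolyTime`). -/
def PolyTimeComputable (f : List Bool → List Bool) : Prop :=
  Nonempty (Turing.TM2ComputableInPolyTime boolsEnc.encode boolsEnc.encode f)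

/-- Polynomial-time many-one reducibility. -/
def Reduces (A B : Lang) : Prop :=
  ∃ f : List Bool → List Bool, PolyTimeComputable f ∧ ∀ x, A x ↔ B (f x)

/-- Pairing of an input with a certificate. -/
def pairEnc (x c : List Bool) : List Bool :=
  (x.flatMap fun b => [true, b]) ++ false :: c

/-- `A` is in NP: membership is certified by certificates of polynomially
bounded length, checkable by a polynomial-time verifier. -/
def InNP (A : Lang) : Prop :=
  ∃ (g : List Bool → List Bool) (q : Polynomial ℕ),
    PolyTimeComputable g ∧
    ∀ x, A x ↔ ∃ c : List Bool,
      c.length ≤ q.eval x.length ∧ g (pairEnc x c) = [true]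

/-- `B` is NP-hard. -/
def NPHard (B : Lang) : Prop := ∀ A, InNP A → Reduces A B

def encNat (k : ℕ) : List Bool := List.replicate k true ++ [false]

def encTree {n : ℕ} : PTree (Fin n) → List Bool
  | .leaf x => false :: encNat x.val
  | .node l r => true :: (encTree l ++ encTree r)

open PTree in
/-- The decision version of computing the HOP measure `d*_HOP`. -/
noncomputable def HOPLang : Lang := fun w =>
  ∃ (n : ℕ) (t t' : PTree (Fin n)) (k : ℕ),
    w = encNat n ++ encTree t ++ encTree t' ++ encNat k ∧
    t.IsPhylo ∧ t'.IsPhylo ∧ t.labelSet = t'.labelSet ∧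
    dHOPstar t t' ≤ k

end Phylo
namespace Phylo
open PTree

-- ### helpers for ola_order_dependence
section OLAOrderHelpers
variable {W : Type} [DecidableEq W]

private lemma range_map_one {α : Type} (f : ℕ → α) (m : ℕ) :
    (List.range (m + 1)).map f = f 0 :: (List.range m).map (fun j => f (j + 1)) := by
  induction m with
  | zero => simp [List.range_succ]
  | succ m ih =>
    rw [List.range_succ, List.map_append, ih, List.range_succ, List.map_append]
    simp

private lemma range_map_two {α : Type} (f : ℕ → α) (m : ℕ) :
    (List.range (m + 2)).map f = f 0 :: f 1 :: (List.range m).map (fun j => f (j + 2)) := by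
  rw [show m + 2 = (m + 1) + 1 from rfl, range_map_one, range_map_one]

private lemma range_split_two (k : ℕ) :
    List.range (k + 2) = 0 :: 1 :: (List.range k).map (fun j => j + 2) := by
  simpa using range_map_two (fun j : ℕ => j) k

private lemma caterpillar_nil (a b : W) : caterpillar a b [] = .node (.leaf a) (.leaf b) := rfl

private lemma caterpillar_snoc (a b : W) (zs : List W) (z : W) :
    caterpillar a b (zs ++ [z]) = .node (caterpillar a b zs) (.leaf z) := by
  simp [caterpillar, List.foldl_append]

private lemma caterpillar_ne_leaf (a b x : W) (zs : List W) : caterpillar a b zs ≠ .leaf x := by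
  induction zs using List.reverseRecOn with
  | nil => simp [caterpillar_nil]
  | append_singleton ws z ih => rw [caterpillar_snoc]; simp

private lemma leaves_caterpillar (a b : W) (zs : List W) :
    (caterpillar a b zs).leaves = a :: b :: zs := by
  induction zs using List.reverseRecOn with
  | nil => rfl
  | append_singleton ws z ih => rw [caterpillar_snoc]; simp [leaves, ih]

private lemma map_caterpillar {V : Type} [DecidableEq V] (f : W → V) (a b : W) (zs : List W) :
    (caterpillar a b zs).map f = caterpillar (f a) (f b) (zs.map f) := by
  induction zs using List.reverseRecOn with
  | nil => rfl
  | append_singleton ws z ih => rw [caterpillar_snoc]; simp [PTree.map, ih, caterpillar_snoc]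

private lemma leaves_map {V : Type} (f : W → V) (t : PTree W) :
    (t.map f).leaves = t.leaves.map f := by
  induction t with
  | leaf x => rfl
  | node l r ihl ihr => simp [PTree.map, leaves, ihl, ihr]

private lemma restrict_all (p : W → Bool) (t : PTree W) (h : ∀ x ∈ t.leaves, p x = true) :
    restrict p t = some t := by
  induction t with
  | leaf x => simp [restrict, h x (by simp [leaves])]
  | node l r ihl ihr =>
    have h1 := ihl (fun x hx => h x (by simp [leaves, hx]))
    have h2 := ihr (fun x hx => h x (by simp [leaves, hx]))
    simp [restrict, h1, h2]

def ocat : List ℕ → Option (PTree ℕ)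
  | [] => none
  | [a] => some (.leaf a)
  | a :: b :: l => some (caterpillar a b l)

private lemma restrict_caterpillar (p : ℕ → Bool) (a b : ℕ) (zs : List ℕ) :
    restrict p (caterpillar a b zs) = ocat ((a :: b :: zs).filter p) := by
  induction zs using List.reverseRecOn with
  | nil =>
    rw [caterpillar_nil]
    cases ha : p a <;> cases hb : p b <;>
      simp [restrict, ocat, ha, hb, caterpillar_nil]
  | append_singleton ws z ih =>
    rw [caterpillar_snoc, show a :: b :: (ws ++ [z]) = (a :: b :: ws) ++ [z] from rfl,
      List.filter_append]
    rcases hF : (a :: b :: ws).filter p with _ | ⟨x, _ | ⟨y, l⟩⟩ <;>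
      rw [hF] at ih <;>
      cases hz : p z <;>
      simp [restrict, ocat, ih, hz, caterpillar_snoc, caterpillar_nil]

private lemma sibling_node_right (i : W) (t : PTree W) (h : t ≠ .leaf i) :
    sibling i (.node t (.leaf i)) = some t := by
  simp [sibling, h]

private lemma sibling_first (a b : W) (zs : List W) (h : a ∉ zs) :
    sibling a (caterpillar a b zs) = some (.leaf b) := by
  induction zs using List.reverseRecOn with
  | nil => simp [caterpillar_nil, sibling]
  | append_singleton ws z ih =>
    rw [caterpillar_snoc]
    have hz : z ≠ a := by rintro rfl; simp at h
    have hw : a ∉ ws := fun hm => h (by simp [hm])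
    simp [sibling, caterpillar_ne_leaf, ih hw, hz]

private lemma sibling_second (a b : W) (zs : List W) (hab : b ≠ a) (h : b ∉ zs) :
    sibling b (caterpillar a b zs) = some (.leaf a) := by
  induction zs using List.reverseRecOn with
  | nil => simp [caterpillar_nil, sibling, Ne.symm hab]
  | append_singleton ws z ih =>
    rw [caterpillar_snoc]
    have hz : z ≠ b := by rintro rfl; simp at h
    have hw : b ∉ ws := fun hm => h (by simp [hm])
    simp [sibling, caterpillar_ne_leaf, ih hw, hz]

private lemma one_le_minLeaf (t : PTree ℕ) (h : ∀ x ∈ t.leaves, 1 ≤ x) : 1 ≤ minLeaf t := by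
  induction t with
  | leaf x => exact h x (by simp [leaves])
  | node l r ihl ihr =>
    simp only [minLeaf, le_min_iff]
    exact ⟨ihl fun x hx => h x (by simp [leaves, hx]), ihr fun x hx => h x (by simp [leaves, hx])⟩

private lemma olaLabel_caterpillar_le (a b : ℕ) (zs : List ℕ) (h : ∀ x ∈ a :: b :: zs, 1 ≤ x) :
    olaLabel (caterpillar a b zs) ≤ -1 := by
  induction zs using List.reverseRecOn with
  | nil =>
    have ha : 1 ≤ a := h a (by simp)
    have : 1 ≤ max a b := le_max_of_le_left ha
    simp only [caterpillar_nil, olaLabel, minLeaf]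
    omega
  | append_singleton ws z ih =>
    have hz : 1 ≤ z := h z (by simp)
    rw [caterpillar_snoc]
    simp only [olaLabel, minLeaf]
    have : 1 ≤ max (minLeaf (caterpillar a b ws)) z := le_max_of_le_right hz
    omega

private lemma olaCoord_eq (t ti s : PTree ℕ) (i : ℕ)
    (h1 : restrict (fun x => decide (x ≤ i)) t = some ti)
    (h2 : sibling i ti = some s) : olaCoord t i = olaLabel s := by
  simp only [olaCoord, h1, h2]

private lemma filter_lt_range (i m : ℕ) (h : i ≤ m) :
    (List.range m).filter (fun j => decide (j < i)) = List.range i := by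
  induction m with
  | zero =>
    have hi0 : i = 0 := by omega
    subst hi0
    rfl
  | succ m ih =>
    rcases Nat.lt_or_ge m i with hc | hc
    · have : i = m + 1 := by omega
      subst this
      apply List.filter_eq_self.mpr
      intro a ha
      simp only [List.mem_range] at ha
      simpa using ha
    · rw [List.range_succ, List.filter_append, ih hc]
      have hm : ¬ (m < i) := by omega
      simp [hm]

private lemma filter_ge_range (c m : ℕ) (h : c ≤ m) :
    (List.range m).filter (fun j => decide (c ≤ j))
      = (List.range (m - c)).map (fun j => c + j) := by
  induction m with
  | zero =>
    have hc0 : c = 0 := by omega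
    subst hc0
    rfl
  | succ m ih =>
    rcases Nat.lt_or_ge m c with hc | hc
    · have hc1 : c = m + 1 := by omega
      subst hc1
      rw [List.filter_eq_nil_iff.mpr ?_, Nat.sub_self]
      · rfl
      · intro a ha
        simp only [List.mem_range] at ha
        simp
        omega
    · rw [List.range_succ, List.filter_append, ih hc]
      have h1 : m + 1 - c = (m - c) + 1 := by omega
      rw [h1, List.range_succ, List.map_append]
      have h2 : c + (m - c) = m := by omega
      simp [hc, h2]

private lemma exists_two_of_le_length {α : Type} (l : List α) (h : 2 ≤ l.length) :
    ∃ a b t, l = a :: b :: t := by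
  match l with
  | [] => simp at h
  | [a] => simp at h
  | a :: b :: t => exact ⟨a, b, t, rfl⟩

private lemma hamming_maps (f g : ℕ → ℤ) (m : ℕ) :
    hamming ((List.range m).map f) ((List.range m).map g)
      = List.countP (fun j => decide (f j ≠ g j)) (List.range m) := by
  simp only [hamming, List.zip_map', List.countP_map]
  rfl

private lemma countP_head_false (q : ℕ → Bool) (k : ℕ) (h0 : q 0 = false) (h1 : q 1 = false) :
    List.countP q (0 :: 1 :: (List.range k).map (fun j => j + 2))
      = List.countP (fun j => q (j + 2)) (List.range k) := by
  rw [List.countP_cons, List.countP_cons, h0, h1, List.countP_map]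
  simp [Function.comp_def]

private lemma leaves_A (m : ℕ) :
    (1 : ℕ) :: 2 :: (List.range (m+2)).map (fun j => j + 3)
      = (List.range (m+4)).map (fun j => j + 1) := by
  have h : (List.range (m+4)).map (fun j => j + 1)
      = (0 + 1) :: (1 + 1) :: (List.range (m+2)).map (fun j => (j + 2) + 1) :=
    range_map_two (fun j => j + 1) (m+2)
  rw [h]

private lemma restrict_A (m i : ℕ) (hi : i ≤ m + 4) :
    restrict (fun x => decide (x ≤ i)) (caterpillar 1 2 ((List.range (m+2)).map (fun j => j + 3)))
      = ocat ((List.range i).map (fun j => j + 1)) := by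
  rw [restrict_caterpillar, leaves_A m, List.filter_map,
    List.filter_congr (q := fun j => decide (j < i))
      (fun a _ => by simp only [Function.comp_apply]; exact decide_eq_decide.mpr (by omega)),
    filter_lt_range i (m+4) hi]

private lemma leaves_T2 (m : ℕ) :
    (m + 4 : ℕ) :: 1 :: (List.range (m+2)).map (fun j => j + 2)
      = (m + 4) :: (List.range (m+3)).map (fun j => j + 1) := by
  refine congrArg _ ?_
  have h : (List.range (m+3)).map (fun j => j + 1)
      = (0 + 1) :: (List.range (m+2)).map (fun j => (j + 1) + 1) :=
    range_map_one (fun j => j + 1) (m+2)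
  rw [h]

private lemma restrict_T2 (m i : ℕ) (hi : i ≤ m + 3) :
    restrict (fun x => decide (x ≤ i))
        (caterpillar (m+4) 1 ((List.range (m+2)).map (fun j => j + 2)))
      = ocat ((List.range i).map (fun j => j + 1)) := by
  rw [restrict_caterpillar, leaves_T2 m,
    List.filter_cons_of_neg (by simp; omega), List.filter_map,
    List.filter_congr (q := fun j => decide (j < i))
      (fun a _ => by simp only [Function.comp_apply]; exact decide_eq_decide.mpr (by omega)),
    filter_lt_range i (m+3) hi]

private lemma olaCoord_A_top (m : ℕ) :
    olaCoord (caterpillar 1 2 ((List.range (m+2)).map (fun j => j + 3))) (m+4) ≤ -1 := by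
  have hsplit : (List.range (m+2)).map (fun j => j + 3)
      = (List.range (m+1)).map (fun j => j + 3) ++ [m+4] := by
    have h : List.range (m+2) = List.range (m+1) ++ [m+1] := List.range_succ (n := m+1)
    rw [h, List.map_append]
    norm_num
  rw [hsplit, caterpillar_snoc]
  have hres : restrict (fun x => decide (x ≤ m+4))
      (PTree.node (caterpillar 1 2 ((List.range (m+1)).map (fun j => j + 3))) (.leaf (m+4)))
      = some (PTree.node (caterpillar 1 2 ((List.range (m+1)).map (fun j => j + 3)))
          (.leaf (m+4))) := by
    apply restrict_all
    intro x hx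
    simp only [leaves, leaves_caterpillar, List.mem_append, List.mem_cons, List.mem_map,
      List.mem_range] at hx
    simp only [decide_eq_true_eq]
    rcases hx with (rfl | rfl | ⟨a, ha, rfl⟩) | hx <;> simp_all <;> omega
  rw [olaCoord_eq _ _ _ _ hres (sibling_node_right _ _ (caterpillar_ne_leaf _ _ _ _))]
  apply olaLabel_caterpillar_le
  intro x hx
  simp only [List.mem_cons, List.mem_map, List.mem_range] at hx
  rcases hx with rfl | rfl | ⟨a, ha, rfl⟩ <;> omega

private lemma olaCoord_T2_top (m : ℕ) :
    olaCoord (caterpillar (m+4) 1 ((List.range (m+2)).map (fun j => j + 2))) (m+4) = 1 := by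
  have hres : restrict (fun x => decide (x ≤ m+4))
      (caterpillar (m+4) 1 ((List.range (m+2)).map (fun j => j + 2)))
      = some (caterpillar (m+4) 1 ((List.range (m+2)).map (fun j => j + 2))) := by
    apply restrict_all
    intro x hx
    rw [leaves_caterpillar] at hx
    simp only [List.mem_cons, List.mem_map, List.mem_range] at hx
    simp only [decide_eq_true_eq]
    rcases hx with rfl | rfl | ⟨a, ha, rfl⟩ <;> omega
  have hsib : sibling (m+4) (caterpillar (m+4) 1 ((List.range (m+2)).map (fun j => j + 2)))
      = some (.leaf 1) := by
    apply sibling_first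
    intro hmem
    simp only [List.mem_map, List.mem_range] at hmem
    obtain ⟨a, ha, hv⟩ := hmem
    omega
  rw [olaCoord_eq _ _ _ _ hres hsib]
  simp [olaLabel]

private lemma leaves_D (m : ℕ) :
    (m + 4 : ℕ) :: (m + 3) :: (List.range (m+2)).map (fun j => m + 2 - j)
      = (List.range (m+4)).map (fun j => m + 4 - j) := by
  have h : (List.range (m+4)).map (fun j => m + 4 - j)
      = (m + 4 - 0) :: (m + 4 - 1) :: (List.range (m+2)).map (fun j => m + 4 - (j + 2)) :=
    range_map_two (fun j => m + 4 - j) (m+2)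
  rw [h]
  exact congrArg₂ _ (by omega) (congrArg₂ _ (by omega)
    (List.map_congr_left fun a _ => by omega))

private lemma olaCoord_D (m k : ℕ) (hk : k ≤ m + 1) :
    olaCoord (caterpillar (m+4) (m+3) ((List.range (m+2)).map (fun j => m + 2 - j))) (k+3)
      = ((k + 2 : ℕ) : ℤ) := by
  have hfil : ((List.range (m+4)).map (fun j => m + 4 - j)).filter (fun x => decide (x ≤ k+3))
      = (List.range (k+3)).map (fun j => k + 3 - j) := by
    rw [List.filter_map,
      List.filter_congr (q := fun j => decide (m + 1 - k ≤ j))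
        (fun a _ => by simp only [Function.comp_apply]; exact decide_eq_decide.mpr (by omega)),
      filter_ge_range (m+1-k) (m+4) (by omega), List.map_map,
      show m + 4 - (m + 1 - k) = k + 3 from by omega]
    exact List.map_congr_left fun a _ => by simp only [Function.comp_apply]; omega
  have hre : (List.range (k+3)).map (fun j => k + 3 - j)
      = (k+3) :: (k+2) :: (List.range (k+1)).map (fun j => k + 1 - j) := by
    have h : (List.range (k+3)).map (fun j => k + 3 - j)
        = (k + 3 - 0) :: (k + 3 - 1) :: (List.range (k+1)).map (fun j => k + 3 - (j + 2)) :=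
      range_map_two (fun j => k + 3 - j) (k+1)
    rw [h]
    exact congrArg₂ _ (by omega) (congrArg₂ _ (by omega)
      (List.map_congr_left fun a _ => by omega))
  have hres : restrict (fun x => decide (x ≤ k+3))
      (caterpillar (m+4) (m+3) ((List.range (m+2)).map (fun j => m + 2 - j)))
      = some (caterpillar (k+3) (k+2) ((List.range (k+1)).map (fun j => k + 1 - j))) := by
    rw [restrict_caterpillar, leaves_D m, hfil, hre]
    rfl
  have hsib : sibling (k+3)
      (caterpillar (k+3) (k+2) ((List.range (k+1)).map (fun j => k + 1 - j)))
      = some (.leaf (k+2)) := by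
    apply sibling_first
    intro hmem
    simp only [List.mem_map, List.mem_range] at hmem
    obtain ⟨a, ha, hv⟩ := hmem
    omega
  rw [olaCoord_eq _ _ _ _ hres hsib]
  rfl

private lemma leaves_E (m : ℕ) :
    (1 : ℕ) :: (m + 4) :: (List.range (m+2)).map (fun j => m + 3 - j)
      = 1 :: (List.range (m+3)).map (fun j => m + 4 - j) := by
  refine congrArg _ ?_
  have h : (List.range (m+3)).map (fun j => m + 4 - j)
      = (m + 4 - 0) :: (List.range (m+2)).map (fun j => m + 4 - (j + 1)) :=
    range_map_one (fun j => m + 4 - j) (m+2)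
  rw [h]
  exact congrArg₂ _ (by omega) (List.map_congr_left fun a _ => by omega)

private lemma olaCoord_E (m k : ℕ) (hk : k ≤ m + 1) :
    olaCoord (caterpillar 1 (m+4) ((List.range (m+2)).map (fun j => m + 3 - j))) (k+3) = 1 := by
  have hfil : ((List.range (m+3)).map (fun j => m + 4 - j)).filter (fun x => decide (x ≤ k+3))
      = (List.range (k+2)).map (fun j => k + 3 - j) := by
    rw [List.filter_map,
      List.filter_congr (q := fun j => decide (m + 1 - k ≤ j))
        (fun a _ => by simp only [Function.comp_apply]; exact decide_eq_decide.mpr (by omega)),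
      filter_ge_range (m+1-k) (m+3) (by omega), List.map_map,
      show m + 3 - (m + 1 - k) = k + 2 from by omega]
    exact List.map_congr_left fun a _ => by simp only [Function.comp_apply]; omega
  have hre : (List.range (k+2)).map (fun j => k + 3 - j)
      = (k+3) :: (List.range (k+1)).map (fun j => k + 2 - j) := by
    have h : (List.range (k+2)).map (fun j => k + 3 - j)
        = (k + 3 - 0) :: (List.range (k+1)).map (fun j => k + 3 - (j + 1)) :=
      range_map_one (fun j => k + 3 - j) (k+1)
    rw [h]
    exact congrArg₂ _ (by omega) (List.map_congr_left fun a _ => by omega)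
  have hres : restrict (fun x => decide (x ≤ k+3))
      (caterpillar 1 (m+4) ((List.range (m+2)).map (fun j => m + 3 - j)))
      = some (caterpillar 1 (k+3) ((List.range (k+1)).map (fun j => k + 2 - j))) := by
    rw [restrict_caterpillar, leaves_E m, List.filter_cons_of_pos (by simp), hfil, hre]
    rfl
  have hsib : sibling (k+3)
      (caterpillar 1 (k+3) ((List.range (k+1)).map (fun j => k + 2 - j)))
      = some (.leaf 1) := by
    apply sibling_second
    · omega
    · intro hmem
      simp only [List.mem_map, List.mem_range] at hmem
      obtain ⟨a, ha, hv⟩ := hmem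
      omega
  rw [olaCoord_eq _ _ _ _ hres hsib]
  simp [olaLabel]

private lemma countP_eq_one_last (q : ℕ → Bool) (k : ℕ)
    (hmid : ∀ j < k, q j = false) (hlast : q k = true) :
    List.countP q (List.range (k+1)) = 1 := by
  rw [List.range_succ (n := k), List.countP_append, List.countP_eq_zero.mpr ?_, List.countP_cons]
  · simp [hlast]
  · intro a ha
    simp only [List.mem_range] at ha
    simp [hmid a ha]

private lemma count_sigma (m : ℕ) :
    hamming (olaVec (caterpillar 1 2 ((List.range (m+2)).map (fun j => j + 3))))
      (olaVec (caterpillar (m+4) 1 ((List.range (m+2)).map (fun j => j + 2)))) = 1 := by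
  have hlA : (caterpillar 1 2 ((List.range (m+2)).map (fun j => j + 3))).leaves.length
      = m + 4 := by
    rw [leaves_caterpillar]; simp
  have hlT : (caterpillar (m+4) 1 ((List.range (m+2)).map (fun j => j + 2))).leaves.length
      = m + 4 := by
    rw [leaves_caterpillar]; simp
  simp only [olaVec, hlA, hlT]
  have hsp : List.range (m+4) = 0 :: 1 :: (List.range (m+2)).map (fun j => j + 2) :=
    range_split_two (m+2)
  rw [hamming_maps, hsp, countP_head_false _ _ (by simp) (by simp)]
  refine countP_eq_one_last _ (m+1) ?_ ?_
  · intro j hj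
    have e0 : j + 2 ≠ 0 := by omega
    have e1 : j + 2 ≠ 1 := by omega
    have hA := restrict_A m (j+2+1) (by omega)
    have hT := restrict_T2 m (j+2+1) (by omega)
    have heq : olaCoord (caterpillar 1 2 ((List.range (m+2)).map (fun j => j + 3))) (j+2+1)
        = olaCoord (caterpillar (m+4) 1 ((List.range (m+2)).map (fun j => j + 2))) (j+2+1) := by
      simp only [olaCoord, hA, hT]
    simp only [if_neg e0, if_neg e1, heq]
    simp
  · have e0 : m + 1 + 2 ≠ 0 := by omega
    have e1 : m + 1 + 2 ≠ 1 := by omega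
    simp only [if_neg e0, if_neg e1]
    rw [show m + 1 + 2 + 1 = m + 4 from by omega, olaCoord_T2_top m]
    have h := olaCoord_A_top m
    simp only [ne_eq, decide_eq_true_eq]
    omega

private lemma count_sigma' (m : ℕ) :
    hamming (olaVec (caterpillar (m+4) (m+3) ((List.range (m+2)).map (fun j => m + 2 - j))))
      (olaVec (caterpillar 1 (m+4) ((List.range (m+2)).map (fun j => m + 3 - j)))) = m + 2 := by
  have hlD : (caterpillar (m+4) (m+3)
      ((List.range (m+2)).map (fun j => m + 2 - j))).leaves.length = m + 4 := by
    rw [leaves_caterpillar]; simp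
  have hlE : (caterpillar 1 (m+4)
      ((List.range (m+2)).map (fun j => m + 3 - j))).leaves.length = m + 4 := by
    rw [leaves_caterpillar]; simp
  simp only [olaVec, hlD, hlE]
  have hsp : List.range (m+4) = 0 :: 1 :: (List.range (m+2)).map (fun j => j + 2) :=
    range_split_two (m+2)
  rw [hamming_maps, hsp, countP_head_false _ _ (by simp) (by simp),
    List.countP_eq_length.mpr ?_]
  · simp
  · intro j hj
    simp only [List.mem_range] at hj
    have e0 : j + 2 ≠ 0 := by omega
    have e1 : j + 2 ≠ 1 := by omega
    have hD : olaCoord (caterpillar (m+4) (m+3)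
        ((List.range (m+2)).map (fun j => m + 2 - j))) (j+2+1) = ((j + 2 : ℕ) : ℤ) :=
      olaCoord_D m j (by omega)
    have hE : olaCoord (caterpillar 1 (m+4)
        ((List.range (m+2)).map (fun j => m + 3 - j))) (j+2+1) = 1 :=
      olaCoord_E m j (by omega)
    simp only [if_neg e0, if_neg e1, hD, hE, ne_eq, decide_eq_true_eq]
    omega

private lemma hamming_olaVec_le (m : ℕ) (T T' : PTree ℕ)
    (h1 : T.leaves.length = m + 4) (h2 : T'.leaves.length = m + 4) :
    hamming (olaVec T) (olaVec T') ≤ m + 2 := by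
  simp only [olaVec, h1, h2]
  have hsp : List.range (m+4) = 0 :: 1 :: (List.range (m+2)).map (fun j => j + 2) :=
    range_split_two (m+2)
  rw [hamming_maps, hsp, countP_head_false _ _ (by simp) (by simp)]
  exact List.countP_le_length.trans (by simp)

private lemma generic_coord (m : ℕ) (ρ : ℕ → ℕ)
    (hnodup : ((List.range (m+4)).map ρ).Nodup)
    (hset : ((List.range (m+4)).map ρ).toFinset = Finset.Icc 1 (m+4)) :
    ∃ j, 2 ≤ j ∧ j ≤ m + 3 ∧
      olaCoord (caterpillar (ρ 0) (ρ 1) ((List.range (m+2)).map (fun k => ρ (k+2)))) (j+1)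
        ≠ olaCoord (caterpillar (ρ (m+3)) (ρ 0)
            ((List.range (m+2)).map (fun k => ρ (k+1)))) (j+1) := by
  have hRsplit : (List.range (m+4)).map ρ = (List.range (m+3)).map ρ ++ [ρ (m+3)] := by
    have h : List.range (m+4) = List.range (m+3) ++ [m+3] := List.range_succ (n := m+3)
    rw [h, List.map_append]
    rfl
  have hleaves1 : (ρ 0) :: (ρ 1) :: (List.range (m+2)).map (fun k => ρ (k+2))
      = (List.range (m+4)).map ρ := (range_map_two ρ (m+2)).symm
  have hleaves2 : (ρ 0) :: (List.range (m+2)).map (fun k => ρ (k+1))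
      = (List.range (m+3)).map ρ := (range_map_one ρ (m+2)).symm
  have hmemR : ∀ x : ℕ, x ∈ (List.range (m+4)).map ρ ↔ (1 ≤ x ∧ x ≤ m + 4) := by
    intro x
    rw [← List.mem_toFinset, hset, Finset.mem_Icc]
  have hXnodup : ((List.range (m+3)).map ρ).Nodup := by
    rw [hRsplit] at hnodup
    exact hnodup.of_append_left
  have hbX : ρ (m+3) ∉ (List.range (m+3)).map ρ := by
    have h := hnodup
    rw [hRsplit, List.nodup_append] at h
    exact fun hm => h.2.2 _ hm _ (List.mem_singleton_self _) rfl
  have hbIcc : 1 ≤ ρ (m+3) ∧ ρ (m+3) ≤ m + 4 := by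
    refine (hmemR (ρ (m+3))).mp ?_
    rw [hRsplit]
    exact List.mem_append_right _ (List.mem_singleton_self _)
  have hmemX : ∀ x : ℕ, 1 ≤ x → x ≤ m + 4 → x ≠ ρ (m+3) → x ∈ (List.range (m+3)).map ρ := by
    intro x h1 h2 hne
    have hx : x ∈ (List.range (m+4)).map ρ := (hmemR x).mpr ⟨h1, h2⟩
    rw [hRsplit, List.mem_append] at hx
    rcases hx with h | h
    · exact h
    · exact absurd (List.mem_singleton.mp h) hne
  have hXmem : ∀ x ∈ (List.range (m+3)).map ρ, 1 ≤ x ∧ x ≤ m + 4 := by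
    intro x hx
    refine (hmemR x).mp ?_
    rw [hRsplit]
    exact List.mem_append_left _ hx
  rcases Nat.lt_or_ge (ρ (m+3)) 3 with hb | hb
  · -- small root rank: coordinate 3 differs
    refine ⟨2, le_rfl, by omega, ?_⟩
    rw [show (2 : ℕ) + 1 = 3 from rfl]
    have hFnodup : (((List.range (m+3)).map ρ).filter (fun x => decide (x ≤ 3))).Nodup :=
      hXnodup.filter _
    have hFsub : ∀ x ∈ ((List.range (m+3)).map ρ).filter (fun x => decide (x ≤ 3)),
        x ∈ (List.range (m+3)).map ρ := fun x hx => (List.mem_filter.mp hx).1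
    have h3F : (3:ℕ) ∈ ((List.range (m+3)).map ρ).filter (fun x => decide (x ≤ 3)) :=
      List.mem_filter.mpr ⟨hmemX 3 (by omega) (by omega) (by omega), by simp⟩
    have hcbF : (3 - ρ (m+3)) ∈ ((List.range (m+3)).map ρ).filter (fun x => decide (x ≤ 3)) :=
      List.mem_filter.mpr ⟨hmemX _ (by omega) (by omega) (by omega),
        by simp only [decide_eq_true_eq]; omega⟩
    have hxval : ∀ x ∈ ((List.range (m+3)).map ρ).filter (fun x => decide (x ≤ 3)),
        x = 3 ∨ x = 3 - ρ (m+3) := by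
      intro x hx
      have h1 := (hXmem x (hFsub x hx)).1
      have h2 : x ≤ 3 := by simpa using (List.mem_filter.mp hx).2
      have h3 : x ≠ ρ (m+3) := fun he => hbX (he ▸ hFsub x hx)
      omega
    have hcard : (((List.range (m+3)).map ρ).filter (fun x => decide (x ≤ 3))).length = 2 := by
      have hfs : (((List.range (m+3)).map ρ).filter (fun x => decide (x ≤ 3))).toFinset
          = {3, 3 - ρ (m+3)} := by
        ext x
        simp only [List.mem_toFinset, Finset.mem_insert, Finset.mem_singleton]
        constructor
        · exact hxval x
        · rintro (rfl | rfl)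
          exacts [h3F, hcbF]
      rw [← List.toFinset_card_of_nodup hFnodup, hfs,
        Finset.card_insert_of_notMem (by simp; omega), Finset.card_singleton]
    obtain ⟨u, v, es, hFeq⟩ := exists_two_of_le_length _ (le_of_eq hcard.symm)
    have hes : es = [] := by
      have h := hcard
      rw [hFeq] at h
      simpa using h
    subst hes
    have huv : u ≠ v := by
      have h := hFnodup
      rw [hFeq] at h
      simp at h
      exact h
    have hu := hxval u (by rw [hFeq]; exact List.mem_cons_self)
    have hv := hxval v (by rw [hFeq]; exact List.mem_cons_of_mem _ (List.mem_cons_self))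
    have hune : u ≠ ρ (m+3) := fun he => hbX (he ▸ hFsub u (by rw [hFeq]; exact List.mem_cons_self))
    have hvne : v ≠ ρ (m+3) := fun he => hbX (he ▸ hFsub v
      (by rw [hFeq]; exact List.mem_cons_of_mem _ (List.mem_cons_self)))
    have hfilR : ((List.range (m+4)).map ρ).filter (fun x => decide (x ≤ 3))
        = [u, v, ρ (m+3)] := by
      rw [hRsplit, List.filter_append, hFeq]
      have hone : (List.filter (fun x => decide (x ≤ 3)) [ρ (m+3)]) = [ρ (m+3)] := by
        rw [List.filter_cons_of_pos (by simp only [decide_eq_true_eq]; omega), List.filter_nil]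
      rw [hone]
      rfl
    have hres1 : restrict (fun x => decide (x ≤ 3))
        (caterpillar (ρ 0) (ρ 1) ((List.range (m+2)).map (fun k => ρ (k+2))))
        = some (caterpillar u v [ρ (m+3)]) := by
      rw [restrict_caterpillar, hleaves1, hfilR]
      rfl
    have hres2 : restrict (fun x => decide (x ≤ 3))
        (caterpillar (ρ (m+3)) (ρ 0) ((List.range (m+2)).map (fun k => ρ (k+1))))
        = some (caterpillar (ρ (m+3)) u [v]) := by
      rw [restrict_caterpillar,
        show (ρ (m+3)) :: (ρ 0) :: (List.range (m+2)).map (fun k => ρ (k+1))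
          = (ρ (m+3)) :: (List.range (m+3)).map ρ from congrArg _ hleaves2,
        List.filter_cons_of_pos (by simp only [decide_eq_true_eq]; omega), hFeq]
      rfl
    rcases hu with hu3 | hucb
    · subst hu3
      have hvcb : v = 3 - ρ (m+3) := by
        rcases hv with h | h
        · exact absurd h.symm huv
        · exact h
      have hsib1 : sibling 3 (caterpillar 3 v [ρ (m+3)]) = some (.leaf v) := by
        apply sibling_first
        simp only [List.mem_singleton]
        omega
      have hsib2 : sibling 3 (caterpillar (ρ (m+3)) 3 [v]) = some (.leaf (ρ (m+3))) := by
        apply sibling_second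
        · omega
        · simp only [List.mem_singleton]
          omega
      rw [olaCoord_eq _ _ _ _ hres1 hsib1, olaCoord_eq _ _ _ _ hres2 hsib2]
      simp only [olaLabel, ne_eq, Nat.cast_inj]
      omega
    · have hv3 : v = 3 := by
        rcases hv with h | h
        · exact h
        · exact absurd (h.trans hucb.symm) huv.symm
      subst hv3
      have hsib1 : sibling 3 (caterpillar u 3 [ρ (m+3)]) = some (.leaf u) := by
        apply sibling_second
        · omega
        · simp only [List.mem_singleton]
          omega
      have hsib2 : sibling 3 (caterpillar (ρ (m+3)) u [3])
          = some (.node (.leaf (ρ (m+3))) (.leaf u)) := by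
        rw [show caterpillar (ρ (m+3)) u [3]
            = .node (.node (.leaf (ρ (m+3))) (.leaf u)) (.leaf 3) from rfl]
        exact sibling_node_right _ _ (by simp)
      rw [olaCoord_eq _ _ _ _ hres1 hsib1, olaCoord_eq _ _ _ _ hres2 hsib2]
      simp only [olaLabel, minLeaf, ne_eq]
      have hm1 : 1 ≤ max (ρ (m+3)) u := le_max_of_le_left hbIcc.1
      have hu1 : 1 ≤ u := by omega
      omega
  · -- large root rank b = ρ(m+3) ≥ 3 : coordinate b differs
    refine ⟨ρ (m+3) - 1, by omega, by omega, ?_⟩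
    rw [show ρ (m+3) - 1 + 1 = ρ (m+3) from by omega]
    have hFnodup : (((List.range (m+3)).map ρ).filter
        (fun x => decide (x ≤ ρ (m+3)))).Nodup := hXnodup.filter _
    have hFsub : ∀ x ∈ ((List.range (m+3)).map ρ).filter (fun x => decide (x ≤ ρ (m+3))),
        x ∈ (List.range (m+3)).map ρ := fun x hx => (List.mem_filter.mp hx).1
    have h1F : (1:ℕ) ∈ ((List.range (m+3)).map ρ).filter (fun x => decide (x ≤ ρ (m+3))) :=
      List.mem_filter.mpr ⟨hmemX 1 le_rfl (by omega) (by omega),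
        by simp only [decide_eq_true_eq]; omega⟩
    have h2F : (2:ℕ) ∈ ((List.range (m+3)).map ρ).filter (fun x => decide (x ≤ ρ (m+3))) :=
      List.mem_filter.mpr ⟨hmemX 2 (by omega) (by omega) (by omega),
        by simp only [decide_eq_true_eq]; omega⟩
    have hlen2 : 2 ≤ (((List.range (m+3)).map ρ).filter
        (fun x => decide (x ≤ ρ (m+3)))).length := by
      have hsub : ({1, 2} : Finset ℕ) ⊆ (((List.range (m+3)).map ρ).filter
          (fun x => decide (x ≤ ρ (m+3)))).toFinset := by
        intro x hx
        rw [List.mem_toFinset]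
        rcases Finset.mem_insert.mp hx with rfl | hx2
        · exact h1F
        · rw [Finset.mem_singleton.mp hx2]
          exact h2F
      have hc := Finset.card_le_card hsub
      rw [List.toFinset_card_of_nodup hFnodup] at hc
      have c2 : ({1, 2} : Finset ℕ).card = 2 := by decide
      omega
    obtain ⟨e1, e2, es, hFeq⟩ := exists_two_of_le_length _ hlen2
    have hbF : ρ (m+3) ∉ e1 :: e2 :: es := by
      rw [← hFeq]
      exact fun hm => hbX (hFsub _ hm)
    have hfilR : ((List.range (m+4)).map ρ).filter (fun x => decide (x ≤ ρ (m+3)))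
        = e1 :: e2 :: (es ++ [ρ (m+3)]) := by
      rw [hRsplit, List.filter_append, hFeq]
      have hone : (List.filter (fun x => decide (x ≤ ρ (m+3))) [ρ (m+3)]) = [ρ (m+3)] := by
        rw [List.filter_cons_of_pos (by simp), List.filter_nil]
      rw [hone]
      rfl
    have hres1 : restrict (fun x => decide (x ≤ ρ (m+3)))
        (caterpillar (ρ 0) (ρ 1) ((List.range (m+2)).map (fun k => ρ (k+2))))
        = some (.node (caterpillar e1 e2 es) (.leaf (ρ (m+3)))) := by
      rw [restrict_caterpillar, hleaves1, hfilR,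
        show ocat (e1 :: e2 :: (es ++ [ρ (m+3)]))
          = some (caterpillar e1 e2 (es ++ [ρ (m+3)])) from rfl, caterpillar_snoc]
    have hres2 : restrict (fun x => decide (x ≤ ρ (m+3)))
        (caterpillar (ρ (m+3)) (ρ 0) ((List.range (m+2)).map (fun k => ρ (k+1))))
        = some (caterpillar (ρ (m+3)) e1 (e2 :: es)) := by
      rw [restrict_caterpillar,
        show (ρ (m+3)) :: (ρ 0) :: (List.range (m+2)).map (fun k => ρ (k+1))
          = (ρ (m+3)) :: (List.range (m+3)).map ρ from congrArg _ hleaves2,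
        List.filter_cons_of_pos (by simp), hFeq]
      rfl
    have hsib1 : sibling (ρ (m+3)) (.node (caterpillar e1 e2 es) (.leaf (ρ (m+3))))
        = some (caterpillar e1 e2 es) :=
      sibling_node_right _ _ (caterpillar_ne_leaf _ _ _ _)
    have hsib2 : sibling (ρ (m+3)) (caterpillar (ρ (m+3)) e1 (e2 :: es))
        = some (.leaf e1) := by
      apply sibling_first
      intro hm
      exact hbF (List.mem_cons_of_mem _ hm)
    rw [olaCoord_eq _ _ _ _ hres1 hsib1, olaCoord_eq _ _ _ _ hres2 hsib2]
    have hneg : olaLabel (caterpillar e1 e2 es) ≤ -1 := by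
      apply olaLabel_caterpillar_le
      intro x hx
      refine (hXmem x (hFsub x ?_)).1
      rw [hFeq]
      exact hx
    have he1 : 1 ≤ e1 := by
      refine (hXmem e1 (hFsub e1 ?_)).1
      rw [hFeq]
      exact List.mem_cons_self
    rw [show olaLabel (.leaf e1) = (e1 : ℤ) from rfl]
    omega


end OLAOrderHelpers

/-- For every `n ≥ 3` there are two rooted binary
phylogenetic trees on `n + 1` leaves and orderings `σ, σ'` with OLA distances
`1` and `n - 1` respectively; the difference of the OLA distances for two
orderings can be as large as `n - 2`, and this bound is sharp for this pair. -/
theorem ola_order_dependence (n : ℕ) (hn : 3 ≤ n) :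
    ∃ (t t' : PTree (Fin (n + 1))) (σ σ' : Fin (n + 1) → ℕ),
      t.IsPhylo ∧ t'.IsPhylo ∧ t.labelSet = t'.labelSet ∧
      IsOrd t σ ∧ IsOrd t σ' ∧
      dOLA σ t t' = 1 ∧ dOLA σ' t t' = n - 1 ∧
      ∀ τ τ' : Fin (n + 1) → ℕ, IsOrd t τ → IsOrd t τ' →
        ((dOLA τ t t' : ℤ) - (dOLA τ' t t' : ℤ)).natAbs ≤ n - 2 := by
  obtain ⟨m, rfl⟩ : ∃ m, n = m + 3 := ⟨n - 3, by omega⟩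
  set c : ℕ → Fin (m + 3 + 1) := fun k => (open Fin.NatCast in (k : Fin (m + 3 + 1))) with hc
  have hcv : ∀ k : ℕ, k < m + 4 → (c k).val = k := fun k hk => Fin.val_cast_of_lt hk
  have hinj : ∀ x, x < m + 4 → ∀ y, y < m + 4 → c x = c y → x = y := by
    intro x hx y hy hxy
    have h := congrArg Fin.val hxy
    rwa [hcv x hx, hcv y hy] at h
  set t : PTree (Fin (m + 3 + 1)) :=
    caterpillar (c 0) (c 1) ((List.range (m+2)).map (fun j => c (j+2))) with ht
  set t' : PTree (Fin (m + 3 + 1)) :=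
    caterpillar (c (m+3)) (c 0) ((List.range (m+2)).map (fun j => c (j+1))) with ht'
  have hlv : t.leaves = (List.range (m+4)).map c := by
    rw [ht, leaves_caterpillar]
    exact (range_map_two c (m+2)).symm
  have hlv' : t'.leaves = c (m+3) :: (List.range (m+3)).map c := by
    rw [ht', leaves_caterpillar]
    exact congrArg _ (range_map_one c (m+2)).symm
  have hlen : t.leaves.length = m + 4 := by rw [hlv]; simp
  have hphy : PTree.IsPhylo t := by
    rw [PTree.IsPhylo, hlv]
    refine List.Nodup.map_on ?_ (List.nodup_range)
    intro x hx y hy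
    simp only [List.mem_range] at hx hy
    exact hinj x hx y hy
  have hphy' : PTree.IsPhylo t' := by
    rw [PTree.IsPhylo, hlv']
    refine List.nodup_cons.mpr ⟨?_, ?_⟩
    · intro hmem
      simp only [List.mem_map, List.mem_range] at hmem
      obtain ⟨a, ha, hv⟩ := hmem
      have := hinj a (by omega) (m+3) (by omega) hv
      omega
    · refine List.Nodup.map_on ?_ (List.nodup_range)
      intro x hx y hy
      simp only [List.mem_range] at hx hy
      exact hinj x (by omega) y (by omega)
  have hlab : PTree.labelSet t = Finset.univ := by
    apply Finset.eq_univ_iff_forall.mpr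
    intro k
    rw [PTree.labelSet, List.mem_toFinset, hlv]
    exact List.mem_map.mpr ⟨k.val, List.mem_range.mpr k.isLt, Fin.cast_val_eq_self k⟩
  have hlab' : PTree.labelSet t' = Finset.univ := by
    apply Finset.eq_univ_iff_forall.mpr
    intro k
    rw [PTree.labelSet, List.mem_toFinset, hlv']
    rcases Nat.lt_or_ge k.val (m+3) with hk | hk
    · exact List.mem_cons_of_mem _
        (List.mem_map.mpr ⟨k.val, List.mem_range.mpr hk, Fin.cast_val_eq_self k⟩)
    · have hkv : k.val = m + 3 := by have := k.isLt; omega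
      have hck : c (m+3) = k := by
        apply Fin.ext
        rw [hcv (m+3) (by omega)]
        exact hkv.symm
      rw [hck]
      exact List.mem_cons_self
  have hmap : ∀ τ : Fin (m + 3 + 1) → ℕ,
      t.map τ = caterpillar (τ (c 0)) (τ (c 1))
          ((List.range (m+2)).map (fun j => τ (c (j+2)))) ∧
      t'.map τ = caterpillar (τ (c (m+3))) (τ (c 0))
          ((List.range (m+2)).map (fun j => τ (c (j+1)))) := by
    intro τ
    constructor
    · rw [ht, map_caterpillar, List.map_map]
      rfl
    · rw [ht', map_caterpillar, List.map_map]
      rfl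
  have hσOrd : IsOrd t (fun k : Fin (m + 3 + 1) => k.val + 1) := by
    unfold IsOrd
    rw [hlab, hlen, Finset.coe_univ]
    refine ⟨fun k _ => ?_, fun k _ k' _ h => ?_, fun x hx => ?_⟩
    · have := k.isLt
      show k.val + 1 ∈ Set.Icc 1 (m + 4)
      simp only [Set.mem_Icc]
      omega
    · have h' : k.val + 1 = k'.val + 1 := h
      exact Fin.ext (by omega)
    · simp only [Set.mem_Icc] at hx
      refine ⟨⟨x - 1, by omega⟩, Set.mem_univ _, ?_⟩
      show x - 1 + 1 = x
      omega
  have hσ'Ord : IsOrd t (fun k : Fin (m + 3 + 1) =>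
      if k.val = m + 3 then 1 else m + 4 - k.val) := by
    unfold IsOrd
    rw [hlab, hlen, Finset.coe_univ]
    refine ⟨fun k _ => ?_, fun k _ k' _ h => ?_, fun x hx => ?_⟩
    · have := k.isLt
      show (if k.val = m + 3 then 1 else m + 4 - k.val) ∈ Set.Icc 1 (m + 4)
      simp only [Set.mem_Icc]
      split <;> omega
    · have h1 := k.isLt
      have h2 := k'.isLt
      have h' : (if k.val = m + 3 then 1 else m + 4 - k.val)
          = (if k'.val = m + 3 then 1 else m + 4 - k'.val) := h
      apply Fin.ext
      split_ifs at h' <;> omega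
    · simp only [Set.mem_Icc] at hx
      rcases Nat.eq_or_lt_of_le hx.1 with h1 | h1
      · refine ⟨⟨m + 3, by omega⟩, Set.mem_univ _, ?_⟩
        show (if m + 3 = m + 3 then 1 else m + 4 - (m + 3)) = x
        rw [if_pos rfl]
        omega
      · refine ⟨⟨m + 4 - x, by omega⟩, Set.mem_univ _, ?_⟩
        show (if m + 4 - x = m + 3 then 1 else m + 4 - (m + 4 - x)) = x
        rw [if_neg (by omega)]
        omega
  have hd1 : dOLA (fun k : Fin (m + 3 + 1) => k.val + 1) t t' = 1 := by
    have h1 : t.map (fun k : Fin (m + 3 + 1) => k.val + 1)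
        = caterpillar 1 2 ((List.range (m+2)).map (fun j => j + 3)) := by
      rw [(hmap _).1]
      have e0 : (c 0).val + 1 = 1 := by rw [hcv 0 (by omega)]
      have e1 : (c 1).val + 1 = 2 := by rw [hcv 1 (by omega)]
      have e2 : (List.range (m+2)).map (fun j => (c (j+2)).val + 1)
          = (List.range (m+2)).map (fun j => j + 3) := by
        refine List.map_congr_left fun a ha => ?_
        simp only [List.mem_range] at ha
        rw [hcv (a+2) (by omega)]
      simp only [e0, e1, e2]
    have h2 : t'.map (fun k : Fin (m + 3 + 1) => k.val + 1)
        = caterpillar (m+4) 1 ((List.range (m+2)).map (fun j => j + 2)) := by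
      rw [(hmap _).2]
      have e0 : (c (m+3)).val + 1 = m + 4 := by rw [hcv (m+3) (by omega)]
      have e1 : (c 0).val + 1 = 1 := by rw [hcv 0 (by omega)]
      have e2 : (List.range (m+2)).map (fun j => (c (j+1)).val + 1)
          = (List.range (m+2)).map (fun j => j + 2) := by
        refine List.map_congr_left fun a ha => ?_
        simp only [List.mem_range] at ha
        rw [hcv (a+1) (by omega)]
      simp only [e0, e1, e2]
    unfold dOLA
    rw [h1, h2]
    exact count_sigma m
  have hd2 : dOLA (fun k : Fin (m + 3 + 1) =>
      if k.val = m + 3 then 1 else m + 4 - k.val) t t' = m + 2 := by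
    have h1 : t.map (fun k : Fin (m + 3 + 1) => if k.val = m + 3 then 1 else m + 4 - k.val)
        = caterpillar (m+4) (m+3) ((List.range (m+2)).map (fun j => m + 2 - j)) := by
      rw [(hmap _).1]
      have e0 : (if (c 0).val = m + 3 then 1 else m + 4 - (c 0).val) = m + 4 := by
        rw [hcv 0 (by omega), if_neg (by omega)]
        omega
      have e1 : (if (c 1).val = m + 3 then 1 else m + 4 - (c 1).val) = m + 3 := by
        rw [hcv 1 (by omega), if_neg (by omega)]
        omega
      have e2 : (List.range (m+2)).map
            (fun j => if (c (j+2)).val = m + 3 then 1 else m + 4 - (c (j+2)).val)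
          = (List.range (m+2)).map (fun j => m + 2 - j) := by
        refine List.map_congr_left fun a ha => ?_
        simp only [List.mem_range] at ha
        rw [hcv (a+2) (by omega)]
        split_ifs <;> omega
      simp only [e0, e1, e2]
    have h2 : t'.map (fun k : Fin (m + 3 + 1) => if k.val = m + 3 then 1 else m + 4 - k.val)
        = caterpillar 1 (m+4) ((List.range (m+2)).map (fun j => m + 3 - j)) := by
      rw [(hmap _).2]
      have e0 : (if (c (m+3)).val = m + 3 then 1 else m + 4 - (c (m+3)).val) = 1 := by
        rw [hcv (m+3) (by omega), if_pos rfl]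
      have e1 : (if (c 0).val = m + 3 then 1 else m + 4 - (c 0).val) = m + 4 := by
        rw [hcv 0 (by omega), if_neg (by omega)]
        omega
      have e2 : (List.range (m+2)).map
            (fun j => if (c (j+1)).val = m + 3 then 1 else m + 4 - (c (j+1)).val)
          = (List.range (m+2)).map (fun j => m + 3 - j) := by
        refine List.map_congr_left fun a ha => ?_
        simp only [List.mem_range] at ha
        rw [hcv (a+1) (by omega), if_neg (by omega)]
        omega
      simp only [e0, e1, e2]
    unfold dOLA
    rw [h1, h2]
    exact count_sigma' m
  have hbounds : ∀ τ : Fin (m + 3 + 1) → ℕ, IsOrd t τ →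
      1 ≤ dOLA τ t t' ∧ dOLA τ t t' ≤ m + 2 := by
    intro τ hτ
    unfold IsOrd at hτ
    rw [hlab, hlen, Finset.coe_univ] at hτ
    have hρnodup : ((List.range (m+4)).map (fun k => τ (c k))).Nodup := by
      refine List.Nodup.map_on ?_ (List.nodup_range)
      intro x hx y hy hxy
      simp only [List.mem_range] at hx hy
      exact hinj x hx y hy (hτ.2.1 (Set.mem_univ (c x)) (Set.mem_univ (c y)) hxy)
    have hρset : ((List.range (m+4)).map (fun k => τ (c k))).toFinset
        = Finset.Icc 1 (m+4) := by
      ext x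
      simp only [List.mem_toFinset, List.mem_map, List.mem_range, Finset.mem_Icc]
      constructor
      · rintro ⟨k, hk, rfl⟩
        have := hτ.1 (Set.mem_univ (c k))
        simpa [Set.mem_Icc] using this
      · intro hx
        obtain ⟨y, -, hy⟩ := hτ.2.2 (Set.mem_Icc.mpr hx)
        refine ⟨y.val, y.isLt, ?_⟩
        have hcy : c y.val = y := Fin.cast_val_eq_self y
        rw [hcy]
        exact hy
    have hl1 : (caterpillar (τ (c 0)) (τ (c 1))
        ((List.range (m+2)).map (fun j => τ (c (j+2))))).leaves.length = m + 4 := by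
      rw [leaves_caterpillar]; simp
    have hl2 : (caterpillar (τ (c (m+3))) (τ (c 0))
        ((List.range (m+2)).map (fun j => τ (c (j+1))))).leaves.length = m + 4 := by
      rw [leaves_caterpillar]; simp
    constructor
    · obtain ⟨j, hj2, hj3, hne⟩ := generic_coord m (fun k => τ (c k)) hρnodup hρset
      unfold dOLA
      rw [(hmap τ).1, (hmap τ).2]
      simp only [olaVec, hl1, hl2]
      rw [hamming_maps]
      refine List.countP_pos_iff.mpr ⟨j, List.mem_range.mpr (by omega), ?_⟩
      have e0 : j ≠ 0 := by omega
      have e1 : j ≠ 1 := by omega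
      simp only [if_neg e0, if_neg e1, ne_eq, decide_eq_true_eq]
      exact hne
    · unfold dOLA
      rw [(hmap τ).1, (hmap τ).2]
      exact hamming_olaVec_le m _ _ hl1 hl2
  refine ⟨t, t', (fun k => k.val + 1),
    (fun k => if k.val = m + 3 then 1 else m + 4 - k.val),
    hphy, hphy', by rw [hlab, hlab'], hσOrd, hσ'Ord, hd1, ?_, ?_⟩
  · rw [show m + 3 - 1 = m + 2 from rfl]
    exact hd2
  · intro τ τ' h1 h2
    obtain ⟨ha1, ha2⟩ := hbounds τ h1
    obtain ⟨hb1, hb2⟩ := hbounds τ' h2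
    omega


end Phylo
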